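/- As formal power series over ℤ, ∏_{k≥1} (1 + X^{2k})(1 − X^{2k−1}) · ∏_{k≥1} (1 − X^{2k}) = ∑_{n≥0} (−1)^{n(n+1)/2} X^{n(n+1)/2}; that is, this product equals ψ(−X), where ψ is Ramanujan's theta function. -/

import Mathlib

open scoped Classical

open PowerSeries

/-- The infinite product `∏_{k ≥ 0} f k` of formal power series, in the situation where the
`k`-th factor is `1 + (multiple of X^(k+1))`: the coefficient of `X^n` in the product is then
the (stable) coefficient of `X^n` in any partial product containing at least the first `n + 1`
factors. -/
noncomputable def iprod (f : ℕ → PowerSeries ℤ) : PowerSeries ℤ :=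
  PowerSeries.mk fun n => PowerSeries.coeff n (∏ k ∈ Finset.range (n + 1), f k)

namespace JTPaux

/-- Gaussian binomial coefficient in base `X^4`, as a power series over ℤ. -/
noncomputable def gb : ℕ → ℕ → PowerSeries ℤ
  | 0, 0 => 1
  | 0, _+1 => 0
  | _+1, 0 => 1
  | M+1, k+1 => gb M k + X ^ (4*(k+1)) * gb M (k+1)

lemma gb_zero (M : ℕ) : gb M 0 = 1 := by cases M <;> rfl

lemma gb_pascalA (M k : ℕ) : gb (M+1) (k+1) = gb M k + X ^ (4*(k+1)) * gb M (k+1) := rfl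

lemma gb_vanish : ∀ M k : ℕ, M < k → gb M k = 0 := by
  intro M
  induction M with
  | zero => intro k hk; match k, hk with | k+1, _ => rfl
  | succ M ih =>
    intro k hk
    match k, hk with
    | k+1, hk =>
      rw [gb_pascalA, ih k (by omega), ih (k+1) (by omega)]
      ring

lemma gb_E : ∀ M k : ℕ, gb M k * (1 - X ^ (4*(M-k))) = gb M (k+1) * (1 - X ^ (4*(k+1))) := by
  intro M
  induction M with
  | zero =>
    intro k
    cases k with
    | zero => simp [gb]
    | succ k => rw [gb_vanish 0 (k+1) (by omega), gb_vanish 0 (k+2) (by omega)]; ring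
  | succ M ih =>
    intro k
    cases k with
    | zero =>
      rw [gb_zero, gb_pascalA, gb_zero, Nat.sub_zero]
      have h1 := ih 0
      rw [Nat.sub_zero, gb_zero] at h1
      have hx : (X : ℤ⟦X⟧) ^ (4*(0+1)) * X ^ (4*M) = X ^ (4*(M+1)) := by
        rw [← pow_add]; congr 1; omega
      linear_combination (X : ℤ⟦X⟧) ^ (4*(0+1)) * h1 - gb M (0+1) * hx
        + hx - (X : ℤ⟦X⟧)^(4*(0+1)) * (1:ℤ⟦X⟧) * (1:ℤ⟦X⟧)
    | succ k =>
      rcases Nat.lt_or_ge k M with hkM | hkM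
      · -- k + 1 ≤ M
        rw [gb_pascalA, gb_pascalA, show (M+1) - (k+1) = M - k from by omega]
        have h1 := ih k
        have h2 := ih (k+1)
        have hx : (X : ℤ⟦X⟧) ^ (4*(k+1)) * X ^ (4*(M-k)) = X ^ (4*(k+2)) * X ^ (4*(M-(k+1))) := by
          rw [← pow_add, ← pow_add]; congr 1; omega
        linear_combination h1 + (X : ℤ⟦X⟧) ^ (4*(k+1)) * (gb M (k+1)) * (1:ℤ⟦X⟧)
          - gb M (k+1) * hx + (X : ℤ⟦X⟧) ^ (4*(k+2)) * h2
          - (X : ℤ⟦X⟧) ^ (4*(k+1)) * gb M (k+1)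
      · -- k ≥ M
        rcases Nat.lt_or_ge (M+1) (k+1) with h | h
        · rw [gb_vanish (M+1) (k+1) h, gb_vanish (M+1) (k+2) (by omega)]; ring
        · rw [gb_vanish (M+1) (k+2) (by omega), show (M+1) - (k+1) = 0 from by omega]
          simp

lemma gb_pascalB (M k : ℕ) : gb (M+1) (k+1) = X ^ (4*(M-k)) * gb M k + gb M (k+1) := by
  rcases Nat.lt_or_ge M k with h | h
  · rw [gb_vanish M k h, gb_vanish M (k+1) (by omega), gb_vanish (M+1) (k+1) (by omega)]; ring
  · have hE := gb_E M k
    rw [gb_pascalA]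
    linear_combination hE

lemma gb_triple (M k : ℕ) : gb (M+2) (k+2)
    = X ^ (4*(M-k)) * gb M k + (1 + X ^ (4*(M+1))) * gb M (k+1) + X ^ (4*(k+2)) * gb M (k+2) := by
  rw [show M + 2 = (M+1)+1 from rfl, gb_pascalA, gb_pascalB, gb_pascalB]
  rcases Nat.lt_or_ge M (k+1) with h | h
  · rw [gb_vanish M (k+1) h, gb_vanish M (k+2) (by omega)]
    ring
  · have hx : (X : ℤ⟦X⟧) ^ (4*(k+1+1)) * X ^ (4*(M-(k+1))) = X ^ (4*(M+1)) := by
      rw [← pow_add]; congr 1; omega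
    linear_combination (gb M (k+1)) * hx

lemma gb_one (M : ℕ) : gb (M+2) 1 = 1 + X ^ (4*(M+1)) + X ^ (4*1) * gb M 1 := by
  rw [show M + 2 = (M+1)+1 from rfl, show (1:ℕ) = 0 + 1 from rfl, gb_pascalA, gb_zero,
    gb_pascalB, gb_zero, show M - 0 = M from rfl]
  have hx : (X : ℤ⟦X⟧) ^ (4*(0+1)) * X ^ (4*M) = X ^ (4*(M+1)) := by
    rw [← pow_add]; congr 1; omega
  linear_combination hx


/-- exponent `|i-N|(2|i-N| ± 1) + ...`, actually `i + 2(i-N)²` symmetrized. -/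
def ee (N i : ℕ) : ℕ := i + 2*((i - N) + (N - i))^2

lemma eeL1 (N i : ℕ) : ee (N+1) (i+1) = ee N i + 1 := by
  unfold ee
  rw [show (i+1) - (N+1) = i - N from by omega, show (N+1) - (i+1) = N - i from by omega]
  ring

lemma eeL2 (N i : ℕ) (hi : i ≤ 2*N) :
    ee (N+1) (i+2) + 4*(2*N - i) = ee N i + (4*N+4) := by
  unfold ee
  rcases le_or_gt N i with h | h
  · rw [Nat.sub_eq_zero_of_le (show N+1 ≤ i+2 by omega), Nat.sub_eq_zero_of_le h]
    zify [show N ≤ i from h, show N+1 ≤ i+2 by omega, hi]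
    ring
  · rw [Nat.sub_eq_zero_of_le (show i+2 ≤ N+1 by omega), Nat.sub_eq_zero_of_le (show i ≤ N by omega)]
    zify [show i+2 ≤ N+1 by omega, show i ≤ N by omega, hi]
    ring

lemma eeL3 (N i : ℕ) : ee (N+1) i + 4*i = ee N i + (4*N+2) := by
  unfold ee
  rcases le_or_gt (N+1) i with h | h
  · rw [Nat.sub_eq_zero_of_le (show N+1 ≤ i from h), Nat.sub_eq_zero_of_le (show N ≤ i by omega)]
    zify [show N+1 ≤ i from h, show N ≤ i by omega]
    ring
  · rw [Nat.sub_eq_zero_of_le (show i ≤ N+1 by omega), Nat.sub_eq_zero_of_le (show i ≤ N by omega)]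
    zify [show i ≤ N+1 by omega, show i ≤ N by omega]
    ring

noncomputable def SS (N : ℕ) : PowerSeries ℤ :=
  ∑ i ∈ Finset.range (2*N+1), (-1 : ℤ⟦X⟧) ^ (i+N) * X ^ (ee N i) * gb (2*N) i

lemma key (N : ℕ) :
    SS (N+1) = X * SS N * ((1 - X^(4*N+1)) * (1 - X^(4*N+3))) := by
  -- abbreviations
  set B2 : ℕ → ℤ⟦X⟧ := fun j =>
    (-1 : ℤ⟦X⟧) ^ (j+N) * (X ^ (ee N j + 1) + X ^ (ee N j + (8*N+5))) * gb (2*N) j with hB2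
  set B3 : ℕ → ℤ⟦X⟧ := fun j =>
    (-1 : ℤ⟦X⟧) ^ (j+N) * X ^ (ee N j + (4*N+2)) * gb (2*N) j with hB3
  set B1 : ℕ → ℤ⟦X⟧ := fun j =>
    (-1 : ℤ⟦X⟧) ^ (j+N) * X ^ (ee N j + (4*N+4)) * gb (2*N) j with hB1
  set f : ℕ → ℤ⟦X⟧ := fun k =>
    (-1 : ℤ⟦X⟧) ^ (k+(N+1)) * X ^ (ee (N+1) k) * gb (2*N+2) k with hf
  -- RHS as a single sum
  have hR : X * SS N * ((1 - X^(4*N+1)) * (1 - X^(4*N+3)))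
      = ∑ i ∈ Finset.range (2*N+1), (B2 i - B3 i - B1 i) := by
    rw [SS, Finset.mul_sum, Finset.sum_mul]
    refine Finset.sum_congr rfl fun i _ => ?_
    simp only [hB2, hB3, hB1]
    ring
  -- LHS split
  have hL : SS (N+1) = (∑ i ∈ Finset.range (2*N+1), f (i+1+1)) + f (0+1) + f 0 := by
    rw [SS, show 2*(N+1)+1 = (2*N+1+1)+1 from by ring, Finset.sum_range_succ',
      Finset.sum_range_succ']
    simp only [show 2*(N+1) = 2*N+2 from by ring]
    rfl
  -- expand the shifted terms
  have hterm : ∀ i ∈ Finset.range (2*N+1),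
      f (i+1+1) = (- B1 i) + B2 (i+1) + (- B3 (i+2)) := by
    intro i hi
    have hi' : i ≤ 2*N := by simpa using Nat.lt_succ_iff.mp (Finset.mem_range.mp hi)
    have h1 : (X : ℤ⟦X⟧) ^ (ee (N+1) (i+2)) * X ^ (4*(2*N-i)) = X ^ (ee N i + (4*N+4)) := by
      rw [← pow_add, eeL2 N i hi']
    have h2 : (X : ℤ⟦X⟧) ^ (ee (N+1) (i+2)) = X ^ (ee N (i+1) + 1) := by
      rw [show i + 2 = (i+1)+1 from rfl, eeL1]
    have h3 : (X : ℤ⟦X⟧) ^ (ee (N+1) (i+2)) * X ^ (4*(i+2)) = X ^ (ee N (i+2) + (4*N+2)) := by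
      rw [← pow_add, eeL3]
    rw [hf, hB1, hB2, hB3]
    simp only [show i+1+1 = i+2 from rfl]
    rw [gb_triple (2*N) i]
    linear_combination
      (-1 : ℤ⟦X⟧)^(i+2+(N+1)) * gb (2*N) i * h1
      + (-1 : ℤ⟦X⟧)^(i+2+(N+1)) * (1 + X^(4*(2*N+1))) * gb (2*N) (i+1) * h2
      + (-1 : ℤ⟦X⟧)^(i+2+(N+1)) * gb (2*N) (i+2) * h3
  -- sums of shifted B2, B3
  have hv : ∑ i ∈ Finset.range (2*N+1), B2 (i+1)
      = (∑ i ∈ Finset.range (2*N+1), B2 i) - B2 0 := by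
    have e1 : ∑ i ∈ Finset.range (2*N+1+1), B2 i
        = (∑ i ∈ Finset.range (2*N+1), B2 (i+1)) + B2 0 := Finset.sum_range_succ' B2 (2*N+1)
    have e2 : ∑ i ∈ Finset.range (2*N+1+1), B2 i
        = (∑ i ∈ Finset.range (2*N+1), B2 i) + B2 (2*N+1) := Finset.sum_range_succ B2 (2*N+1)
    have e3 : B2 (2*N+1) = 0 := by
      simp only [hB2]; rw [gb_vanish (2*N) (2*N+1) (by omega)]; ring
    rw [e3] at e2
    linear_combination e2 - e1
  have hw : ∑ i ∈ Finset.range (2*N+1), B3 (i+2)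
      = (∑ i ∈ Finset.range (2*N+1), B3 i) - B3 1 - B3 0 := by
    have e1 : ∑ i ∈ Finset.range (2*N+1+1+1), B3 i
        = (∑ i ∈ Finset.range (2*N+1+1), B3 (i+1)) + B3 0 := Finset.sum_range_succ' B3 (2*N+1+1)
    have e1' : ∑ i ∈ Finset.range (2*N+1+1), B3 (i+1)
        = (∑ i ∈ Finset.range (2*N+1), B3 (i+1+1)) + B3 (0+1) :=
      Finset.sum_range_succ' (fun i => B3 (i+1)) (2*N+1)
    have e2 : ∑ i ∈ Finset.range (2*N+1+1+1), B3 i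
        = ((∑ i ∈ Finset.range (2*N+1), B3 i) + B3 (2*N+1)) + B3 (2*N+2) := by
      rw [Finset.sum_range_succ, Finset.sum_range_succ]
    have z1 : B3 (2*N+1) = 0 := by
      simp only [hB3]; rw [gb_vanish (2*N) (2*N+1) (by omega)]; ring
    have z2 : B3 (2*N+2) = 0 := by
      simp only [hB3]; rw [gb_vanish (2*N) (2*N+2) (by omega)]; ring
    rw [z1, z2] at e2
    have : ∀ i, B3 (i+1+1) = B3 (i+2) := fun i => rfl
    simp only [this] at e1'
    linear_combination e2 - e1 - e1'
  -- boundary terms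
  have hf0 : f 0 = - B3 0 := by
    simp only [hf, hB3]
    rw [gb_zero, gb_zero]
    have he : ee (N+1) 0 = ee N 0 + (4*N+2) := by
      have := eeL3 N 0; simpa using this
    rw [he]
    ring
  have hf1 : f (0+1) = B2 0 - B3 1 := by
    simp only [hf, hB2, hB3, show (0:ℕ)+1 = 1 from rfl]
    rw [gb_zero, gb_one (2*N)]
    have h2 : (X : ℤ⟦X⟧) ^ (ee (N+1) 1) = X ^ (ee N 0 + 1) := by
      have := eeL1 N 0; rw [show (0:ℕ)+1 = 1 from rfl] at this; rw [this]
    have h3 : (X : ℤ⟦X⟧) ^ (ee (N+1) 1) * X ^ (4*1) = X ^ (ee N 1 + (4*N+2)) := by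
      rw [← pow_add, eeL3 N 1]
    linear_combination
      (-1 : ℤ⟦X⟧)^(0+1+(N+1)) * (1 + X^(4*(2*N+1))) * h2
      + (-1 : ℤ⟦X⟧)^(0+1+(N+1)) * gb (2*N) 1 * h3
  -- assemble
  rw [hL, hR, Finset.sum_congr rfl hterm]
  rw [Finset.sum_add_distrib, Finset.sum_add_distrib, hv, Finset.sum_neg_distrib,
    Finset.sum_neg_distrib, hw, hf0, hf1]
  rw [Finset.sum_sub_distrib, Finset.sum_sub_distrib]
  ring

theorem cauchy (N : ℕ) :
    X ^ N * ∏ k ∈ Finset.range N, ((1 - X^(4*k+1)) * (1 - X^(4*k+3))) = SS N := by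
  induction N with
  | zero =>
    rw [SS]
    simp [ee, gb_zero]
  | succ N ih =>
    rw [key, Finset.prod_range_succ, ← ih]
    ring


/-! ### the product formula for gb -/

lemma gb_D : ∀ M k : ℕ, k ≤ M →
    gb M k * ∏ j ∈ Finset.range k, (1 - X^(4*(j+1)))
      = ∏ j ∈ Finset.range k, (1 - X^(4*(M-k+1+j))) := by
  intro M
  induction M with
  | zero =>
    intro k hk
    interval_cases k
    simp [gb_zero]
  | succ M ih =>
    intro k hk
    cases k with
    | zero => simp [gb_zero]
    | succ k =>
      have hkM : k ≤ M := by omega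
      rw [gb_pascalA, Finset.prod_range_succ]
      have hP : ∏ j ∈ Finset.range (k+1), (1 - (X:ℤ⟦X⟧)^(4*((M+1)-(k+1)+1+j)))
          = (∏ j ∈ Finset.range k, (1 - (X:ℤ⟦X⟧)^(4*(M-k+1+j)))) * (1 - X^(4*(M+1))) := by
        rw [Finset.prod_range_succ, show 4*((M+1)-(k+1)+1+k) = 4*(M+1) from by omega]
        congr 1
        refine Finset.prod_congr rfl fun j hj => ?_
        rw [show 4*((M+1)-(k+1)+1+j) = 4*(M-k+1+j) from by omega]
      rw [hP]
      rcases Nat.lt_or_ge k M with hkM' | hkM'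
      · -- k + 1 ≤ M
        have ih1 := ih k hkM
        have ih2 := ih (k+1) (by omega)
        have hsplit : ∏ j ∈ Finset.range (k+1), (1 - (X:ℤ⟦X⟧)^(4*(M-(k+1)+1+j)))
            = (1 - X^(4*(M-k))) * ∏ j ∈ Finset.range k, (1 - (X:ℤ⟦X⟧)^(4*(M-k+1+j))) := by
          rw [Finset.prod_range_succ', mul_comm]
          congr 1
          · rw [show 4*(M-(k+1)+1+0) = 4*(M-k) from by omega]
          · refine Finset.prod_congr rfl fun j hj => ?_
            rw [show 4*(M-(k+1)+1+(j+1)) = 4*(M-k+1+j) from by omega]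
        rw [hsplit, Finset.prod_range_succ] at ih2
        have hx : (X:ℤ⟦X⟧)^(4*(k+1)) * X^(4*(M-k)) = X^(4*(M+1)) := by
          rw [← pow_add]; congr 1; omega
        linear_combination (1 - (X:ℤ⟦X⟧)^(4*(k+1))) * ih1 + (X:ℤ⟦X⟧)^(4*(k+1)) * ih2
          - (∏ j ∈ Finset.range k, (1 - (X:ℤ⟦X⟧)^(4*(M-k+1+j)))) * hx
      · -- k = M
        have hkeq : k = M := by omega
        subst hkeq
        have ih1 := ih k le_rfl
        rw [gb_vanish k (k+1) (by omega)]
        have hG : ∏ j ∈ Finset.range k, (1 - (X:ℤ⟦X⟧)^(4*(k-k+1+j)))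
            = ∏ j ∈ Finset.range k, (1 - (X:ℤ⟦X⟧)^(4*(j+1))) := by
          refine Finset.prod_congr rfl fun j hj => ?_
          rw [show 4*(k-k+1+j) = 4*(j+1) from by omega]
        rw [hG] at ih1
        rw [hG]
        linear_combination (1 - (X:ℤ⟦X⟧)^(4*(k+1))) * ih1

/-! ### low coefficients -/

def LowOne (s₀ : ℕ) (F : ℤ⟦X⟧) : Prop :=
  ∀ r, r < s₀ → coeff r F = if r = 0 then 1 else 0

lemma lowOne_one_sub {s₀ e : ℕ} (he : s₀ ≤ e) : LowOne s₀ (1 - X^e) := by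
  intro r hr
  rw [map_sub, coeff_one, coeff_X_pow, if_neg (show ¬ r = e by omega), sub_zero]

lemma lowOne_mul {s₀ : ℕ} {A B : ℤ⟦X⟧} (hA : LowOne s₀ A) (hB : LowOne s₀ B) :
    LowOne s₀ (A * B) := by
  intro r hr
  rw [coeff_mul]
  rcases Nat.eq_zero_or_pos r with rfl | hr0
  · rw [Finset.Nat.antidiagonal_zero, Finset.sum_singleton, hA 0 hr, hB 0 hr]
    simp
  · rw [if_neg (by omega)]
    apply Finset.sum_eq_zero
    intro p hp
    have hp' := Finset.HasAntidiagonal.mem_antidiagonal.mp hp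
    rcases Nat.eq_zero_or_pos p.2 with h2 | h2
    · have : p.1 = r := by omega
      rw [hA p.1 (by omega), if_neg (by omega), zero_mul]
    · rw [hB p.2 (by omega), if_neg (by omega), mul_zero]

lemma lowOne_prod {s₀ : ℕ} {ι : Type*} (s : Finset ι) (f : ι → ℤ⟦X⟧)
    (h : ∀ j ∈ s, LowOne s₀ (f j)) : LowOne s₀ (∏ j ∈ s, f j) := by
  induction s using Finset.cons_induction with
  | empty =>
    intro r hr
    rw [Finset.prod_empty, coeff_one]
  | cons a s ha ih =>
    rw [Finset.prod_cons]
    exact lowOne_mul (h a (Finset.mem_cons_self a s))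
      (ih fun j hj => h j (Finset.mem_cons_of_mem hj))

/-! ### stability of truncated infinite products -/

lemma coeff_stab (f : ℕ → ℤ⟦X⟧) (Hf : ∀ k j, j ≤ k → (coeff j) (f k - 1) = 0)
    {n M : ℕ} (h : n + 1 ≤ M) :
    coeff n (∏ k ∈ Finset.range M, f k) = coeff n (∏ k ∈ Finset.range (n+1), f k) := by
  induction M, h using Nat.le_induction with
  | base => rfl
  | succ M hM ih =>
    rw [Finset.prod_range_succ]
    have hr : (∏ k ∈ Finset.range M, f k) * f M
        = (∏ k ∈ Finset.range M, f k) + (∏ k ∈ Finset.range M, f k) * (f M - 1) := by ring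
    rw [hr, map_add, ← ih]
    have hz : coeff n ((∏ k ∈ Finset.range M, f k) * (f M - 1)) = 0 := by
      rw [coeff_mul]
      apply Finset.sum_eq_zero
      intro p hp
      have hp' := Finset.HasAntidiagonal.mem_antidiagonal.mp hp
      rw [Hf M p.2 (by omega), mul_zero]
    rw [hz, add_zero, ih]

lemma coeff_iprod_mul (f g : ℕ → ℤ⟦X⟧)
    (Hf : ∀ k j, j ≤ k → (coeff j) (f k - 1) = 0)
    (Hg : ∀ k j, j ≤ k → (coeff j) (g k - 1) = 0)
    (n M : ℕ) (hM : n + 1 ≤ M) :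
    coeff n (iprod f * iprod g) = coeff n (∏ k ∈ Finset.range M, (f k * g k)) := by
  rw [Finset.prod_mul_distrib, coeff_mul, coeff_mul]
  refine Finset.sum_congr rfl fun p hp => ?_
  have hp' := Finset.HasAntidiagonal.mem_antidiagonal.mp hp
  have h1 : coeff p.1 (iprod f) = coeff p.1 (∏ k ∈ Finset.range M, f k) := by
    rw [iprod, coeff_mk, coeff_stab f Hf (show p.1 + 1 ≤ M by omega)]
  have h2 : coeff p.2 (iprod g) = coeff p.2 (∏ k ∈ Finset.range M, g k) := by
    rw [iprod, coeff_mk, coeff_stab g Hg (show p.2 + 1 ≤ M by omega)]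
  rw [h1, h2]

/-! ### parity and uniqueness helpers -/

lemma negpow (x y : ℕ) (h : x % 2 = y % 2) : (-1:ℤ)^x = (-1:ℤ)^y := by
  conv_lhs => rw [← Nat.div_add_mod x 2]
  conv_rhs => rw [← Nat.div_add_mod y 2]
  rw [pow_add, pow_add, pow_mul, pow_mul, h]
  norm_num

lemma ee_inj (T i i' : ℕ) (h : ee T i = ee T i') : i = i' := by
  unfold ee at h
  rcases le_or_gt T i with h1 | h1 <;> rcases le_or_gt T i' with h2 | h2
  · obtain ⟨a, rfl⟩ : ∃ a, i = T + a := ⟨i - T, by omega⟩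
    obtain ⟨b, rfl⟩ : ∃ b, i' = T + b := ⟨i' - T, by omega⟩
    rw [show T + a - T = a from by omega, show T - (T+a) = 0 from by omega,
        show T + b - T = b from by omega, show T - (T+b) = 0 from by omega] at h
    zify at h
    have hz : ((a:ℤ) - b) * (2*a + 2*b + 1) = 0 := by linear_combination h
    rcases mul_eq_zero.mp hz with hz1 | hz1
    · omega
    · omega
  · obtain ⟨a, rfl⟩ : ∃ a, i = T + a := ⟨i - T, by omega⟩
    obtain ⟨b, hb1, hbT, rfl⟩ : ∃ b, 1 ≤ b ∧ b ≤ T ∧ i' = T - b :=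
      ⟨T - i', by omega, by omega, by omega⟩
    rw [show T + a - T = a from by omega, show T - (T+a) = 0 from by omega,
        show T - b - T = 0 from by omega, show T - (T-b) = b from by omega] at h
    zify [hbT] at h
    have hz : ((a:ℤ) + b) * (2*b - 2*a - 1) = 0 := by linear_combination -h
    rcases mul_eq_zero.mp hz with hz1 | hz1
    · omega
    · omega
  · obtain ⟨a, rfl⟩ : ∃ a, i' = T + a := ⟨i' - T, by omega⟩
    obtain ⟨b, hb1, hbT, rfl⟩ : ∃ b, 1 ≤ b ∧ b ≤ T ∧ i = T - b :=
      ⟨T - i, by omega, by omega, by omega⟩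
    rw [show T + a - T = a from by omega, show T - (T+a) = 0 from by omega,
        show T - b - T = 0 from by omega, show T - (T-b) = b from by omega] at h
    zify [hbT] at h
    have hz : ((a:ℤ) + b) * (2*b - 2*a - 1) = 0 := by linear_combination h
    rcases mul_eq_zero.mp hz with hz1 | hz1
    · omega
    · omega
  · obtain ⟨b, hb1, hbT, rfl⟩ : ∃ b, 1 ≤ b ∧ b ≤ T ∧ i = T - b :=
      ⟨T - i, by omega, by omega, by omega⟩
    obtain ⟨b', hb1', hbT', rfl⟩ : ∃ b', 1 ≤ b' ∧ b' ≤ T ∧ i' = T - b' :=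
      ⟨T - i', by omega, by omega, by omega⟩
    rw [show T - b - T = 0 from by omega, show T - (T-b) = b from by omega,
        show T - b' - T = 0 from by omega, show T - (T-b') = b' from by omega] at h
    zify [hbT, hbT'] at h
    have hz : ((b:ℤ) - b') * (2*b + 2*b' - 1) = 0 := by linear_combination h
    rcases mul_eq_zero.mp hz with hz1 | hz1
    · omega
    · omega

lemma ee_right (T a : ℕ) : ee T (T + a) = T + a + 2*a^2 := by
  unfold ee
  rw [show T + a - T = a from by omega, show T - (T+a) = 0 from by omega]
  ring

lemma ee_left (T b : ℕ) (h : b ≤ T) : ee T (T - b) = (T - b) + 2*b^2 := by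
  unfold ee
  rw [show T - b - T = 0 from by omega, show T - (T-b) = b from by omega]
  ring


/-! ### per-term coefficient evaluation -/

lemma prod_split (i K : ℕ) : ∏ k ∈ Finset.range (i+K), (1 - (X:ℤ⟦X⟧)^(4*(k+1)))
    = (∏ j ∈ Finset.range i, (1 - (X:ℤ⟦X⟧)^(4*(j+1))))
      * ∏ j ∈ Finset.range K, (1 - (X:ℤ⟦X⟧)^(4*(i+j+1))) := by
  rw [Finset.prod_range_add]

lemma term_eval (n T i : ℕ) (hT : T = n+1) (hi : i ≤ 2*T) :
    coeff (n+T) ((-1 : ℤ⟦X⟧)^(i+T) * X^(ee T i) * gb (2*T) i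
      * ∏ k ∈ Finset.range (2*T), (1 - X^(4*(k+1))))
    = (-1:ℤ)^(i+T) * (if ee T i = n+T then 1 else 0) := by
  have hA := prod_split i (2*T - i)
  rw [show i + (2*T - i) = 2*T from by omega] at hA
  have hW : gb (2*T) i * (∏ k ∈ Finset.range (2*T), (1 - (X:ℤ⟦X⟧)^(4*(k+1))))
      = (∏ j ∈ Finset.range i, (1 - (X:ℤ⟦X⟧)^(4*((2*T)-i+1+j))))
        * ∏ j ∈ Finset.range (2*T - i), (1 - (X:ℤ⟦X⟧)^(4*(i+j+1))) := by
    rw [hA, ← mul_assoc, gb_D (2*T) i hi]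
  have hlow : LowOne (4*(T - ((i-T)+(T-i))) + 4)
      (gb (2*T) i * ∏ k ∈ Finset.range (2*T), (1 - (X:ℤ⟦X⟧)^(4*(k+1)))) := by
    rw [hW]
    apply lowOne_mul
    · apply lowOne_prod
      intro j hj
      apply lowOne_one_sub
      have := Finset.mem_range.mp hj
      omega
    · apply lowOne_prod
      intro j hj
      apply lowOne_one_sub
      have := Finset.mem_range.mp hj
      omega
  have hc : ((-1 : ℤ⟦X⟧))^(i+T) = C ((-1:ℤ)^(i+T)) := by rw [map_pow, map_neg, map_one]
  have hre : C ((-1:ℤ)^(i+T)) * X^(ee T i) * gb (2*T) i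
        * (∏ k ∈ Finset.range (2*T), (1 - (X:ℤ⟦X⟧)^(4*(k+1))))
      = C ((-1:ℤ)^(i+T)) * (X^(ee T i)
        * (gb (2*T) i * ∏ k ∈ Finset.range (2*T), (1 - (X:ℤ⟦X⟧)^(4*(k+1))))) := by ring
  rw [hc, hre, coeff_C_mul, coeff_X_pow_mul']
  congr 1
  by_cases h1 : ee T i = n + T
  · rw [if_pos h1, if_pos (show ee T i ≤ n + T from by omega)]
    have h0 := hlow 0 (by omega)
    rw [show n + T - ee T i = 0 from by omega, h0, if_pos rfl]
  · rw [if_neg h1]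
    by_cases h2 : ee T i ≤ n + T
    · rw [if_pos h2]
      have hb : n + T - ee T i < 4*(T - ((i-T)+(T-i))) + 4 := by
        have hdc : ((i-T)+(T-i)) ≤ ((i-T)+(T-i))^2 := Nat.le_self_pow (by norm_num) _
        unfold ee at h2 ⊢
        set c := ((i-T)+(T-i))^2 with hc2
        omega
      rw [hlow _ hb, if_neg (show ¬ (n + T - ee T i = 0) from by omega)]
    · rw [if_neg h2]

/-! ### the counting of triangular numbers -/

lemma count (n : ℕ) :
    (∑ i ∈ Finset.range (2*(n+1)+1),
      (-1:ℤ)^(i+(n+1)) * (if ee (n+1) i = n+(n+1) then 1 else 0))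
    = if ∃ j : ℕ, 2*n = j*(j+1) then (-1:ℤ)^n else 0 := by
  set T := n+1 with hT
  by_cases hex : ∃ j : ℕ, 2*n = j*(j+1)
  · rw [if_pos hex]
    obtain ⟨j, hj⟩ := hex
    rcases Nat.even_or_odd j with hpar | hpar
    · obtain ⟨a, rfl⟩ := hpar
      have hr : (a+a)*((a+a)+1) = 2*(2*a^2+a) := by ring
      rw [hr] at hj
      have hmem : T + a ∈ Finset.range (2*T+1) := Finset.mem_range.mpr (by
        set c := a^2 with hc; omega)
      rw [Finset.sum_eq_single_of_mem (T+a) hmem]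
      · rw [ee_right, if_pos (by set c := a^2 with hc; omega), mul_one]
        apply negpow
        set c := a^2 with hc
        omega
      · intro i hi hne
        rw [if_neg, mul_zero]
        intro hcon
        apply hne
        apply ee_inj T i (T+a)
        rw [hcon, ee_right]
        set c := a^2 with hc
        omega
    · obtain ⟨a, rfl⟩ := hpar
      have hr : (2*a+1)*((2*a+1)+1) + 2*(a+1) = 2*(2*(a+1)^2) := by ring
      have hj' : 2*n + 2*(a+1) = 2*(2*(a+1)^2) := by rw [← hr, ← hj]
      have hb1 : a+1 ≤ (a+1)^2 := Nat.le_self_pow (by norm_num) _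
      have hbT : a+1 ≤ T := by set c := (a+1)^2 with hc; omega
      have hmem : T - (a+1) ∈ Finset.range (2*T+1) := Finset.mem_range.mpr (by omega)
      rw [Finset.sum_eq_single_of_mem (T-(a+1)) hmem]
      · rw [ee_left T (a+1) hbT, if_pos (by set c := (a+1)^2 with hc; omega), mul_one]
        apply negpow
        set c := (a+1)^2 with hc
        omega
      · intro i hi hne
        rw [if_neg, mul_zero]
        intro hcon
        apply hne
        apply ee_inj T i (T-(a+1))
        rw [hcon, ee_left T (a+1) hbT]
        set c := (a+1)^2 with hc
        omega
  · rw [if_neg hex]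
    apply Finset.sum_eq_zero
    intro i hi
    rw [if_neg, mul_zero]
    intro hcon
    apply hex
    rcases le_or_gt T i with h1 | h1
    · obtain ⟨a, rfl⟩ : ∃ a, i = T + a := ⟨i - T, by omega⟩
      rw [ee_right] at hcon
      refine ⟨2*a, ?_⟩
      have hr : (2*a)*((2*a)+1) = 2*(2*a^2+a) := by ring
      rw [hr]
      set c := a^2 with hc
      omega
    · obtain ⟨b, hb1, hbT, rfl⟩ : ∃ b, 1 ≤ b ∧ b ≤ T ∧ i = T - b :=
        ⟨T - i, by omega, by omega, by omega⟩
      rw [ee_left T b hbT] at hcon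
      obtain ⟨b', rfl⟩ : ∃ b', b = b'+1 := ⟨b-1, by omega⟩
      refine ⟨2*b'+1, ?_⟩
      have hr : (2*b'+1)*((2*b'+1)+1) + 2*(b'+1) = 2*(2*(b'+1)^2) := by ring
      set c := (b'+1)^2 with hc
      omega

/-! ### reassembling the product -/

lemma oddsplit (T : ℕ) : ∏ k ∈ Finset.range (2*T), (1 - (X:ℤ⟦X⟧)^(2*k+1))
    = ∏ k ∈ Finset.range T, ((1 - (X:ℤ⟦X⟧)^(4*k+1)) * (1 - X^(4*k+3))) := by
  induction T with
  | zero => simp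
  | succ T ih =>
    rw [show 2*(T+1) = (2*T+1)+1 from by ring, Finset.prod_range_succ, Finset.prod_range_succ,
      Finset.prod_range_succ, ih, show 2*(2*T)+1 = 4*T+1 from by ring,
      show 2*(2*T+1)+1 = 4*T+3 from by ring]
    ring


end JTPaux

open JTPaux

/-- As formal power series over `ℤ`,
`∏_{k ≥ 1} (1 + X^{2k})(1 - X^{2k-1}) · ∏_{k ≥ 1} (1 - X^{2k})
  = ∑_{n ≥ 0} (-1)^{n(n+1)/2} X^{n(n+1)/2} = ψ(-X)`;
the right-hand side has coefficient `(-1)^m` at `X^m` exactly when `m` is a triangular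
number `n(n+1)/2`, and `0` otherwise. -/
theorem stmt14 :
    iprod (fun k => (1 + (X : PowerSeries ℤ) ^ (2 * (k + 1))) *
        (1 - (X : PowerSeries ℤ) ^ (2 * (k + 1) - 1))) *
      iprod (fun k => 1 - (X : PowerSeries ℤ) ^ (2 * (k + 1))) =
    PowerSeries.mk (fun m => if ∃ n : ℕ, 2 * m = n * (n + 1) then (-1 : ℤ) ^ m else 0) := by
  ext n
  rw [PowerSeries.coeff_mk]
  have Hf : ∀ k j, j ≤ k → (coeff j)
      ((1 + (X : ℤ⟦X⟧) ^ (2 * (k + 1))) * (1 - (X : ℤ⟦X⟧) ^ (2 * (k + 1) - 1)) - 1) = 0 := by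
    intro k j hj
    have hre : (1 + (X : ℤ⟦X⟧) ^ (2 * (k + 1))) * (1 - (X : ℤ⟦X⟧) ^ (2 * (k + 1) - 1)) - 1
        = X^(2*k+2) - X^(2*k+1) - X^(4*k+3) := by
      rw [show 2*(k+1) - 1 = 2*k+1 from by omega, show 2*(k+1) = 2*k+2 from by ring]
      have hx : (X:ℤ⟦X⟧)^(2*k+2) * X^(2*k+1) = X^(4*k+3) := by
        rw [← pow_add]; congr 1; omega
      linear_combination -hx
    rw [hre, map_sub, map_sub, coeff_X_pow, coeff_X_pow, coeff_X_pow,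
      if_neg (show ¬ j = 2*k+2 from by omega), if_neg (show ¬ j = 2*k+1 from by omega),
      if_neg (show ¬ j = 4*k+3 from by omega)]
    ring
  have Hg : ∀ k j, j ≤ k → (coeff j) ((1 - (X : ℤ⟦X⟧) ^ (2 * (k + 1))) - 1) = 0 := by
    intro k j hj
    have hre : (1 - (X : ℤ⟦X⟧) ^ (2 * (k + 1))) - 1 = -(X^(2*k+2)) := by
      rw [show 2*(k+1) = 2*k+2 from by ring]; ring
    rw [hre, map_neg, coeff_X_pow, if_neg (show ¬ j = 2*k+2 from by omega), neg_zero]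
  rw [coeff_iprod_mul _ _ Hf Hg n (2*(n+1)) (by omega)]
  have h1 : ∀ k : ℕ, (1 + (X:ℤ⟦X⟧)^(2*(k+1))) * (1 - (X:ℤ⟦X⟧)^(2*(k+1)-1))
        * (1 - (X:ℤ⟦X⟧)^(2*(k+1)))
      = (1 - X^(2*k+1)) * (1 - X^(4*(k+1))) := by
    intro k
    rw [show 2*(k+1)-1 = 2*k+1 from by omega]
    have hx : (X:ℤ⟦X⟧)^(2*(k+1)) * X^(2*(k+1)) = X^(4*(k+1)) := by
      rw [← pow_add]; congr 1; ring
    linear_combination (-(1 - (X:ℤ⟦X⟧)^(2*k+1))) * hx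
  have hprod : (∏ k ∈ Finset.range (2*(n+1)),
        ((1 + (X:ℤ⟦X⟧)^(2*(k+1))) * (1 - (X:ℤ⟦X⟧)^(2*(k+1)-1)) * (1 - (X:ℤ⟦X⟧)^(2*(k+1)))))
      = (∏ k ∈ Finset.range (n+1), ((1 - (X:ℤ⟦X⟧)^(4*k+1)) * (1 - X^(4*k+3))))
        * ∏ k ∈ Finset.range (2*(n+1)), (1 - (X:ℤ⟦X⟧)^(4*(k+1))) := by
    calc ∏ k ∈ Finset.range (2*(n+1)),
          ((1 + (X:ℤ⟦X⟧)^(2*(k+1))) * (1 - (X:ℤ⟦X⟧)^(2*(k+1)-1)) * (1 - (X:ℤ⟦X⟧)^(2*(k+1))))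
        = ∏ k ∈ Finset.range (2*(n+1)), ((1 - (X:ℤ⟦X⟧)^(2*k+1)) * (1 - X^(4*(k+1)))) :=
          Finset.prod_congr rfl (fun k _ => h1 k)
      _ = (∏ k ∈ Finset.range (2*(n+1)), (1 - (X:ℤ⟦X⟧)^(2*k+1)))
          * ∏ k ∈ Finset.range (2*(n+1)), (1 - (X:ℤ⟦X⟧)^(4*(k+1))) := Finset.prod_mul_distrib
      _ = _ := by rw [oddsplit (n+1)]
  rw [hprod]
  rw [← coeff_X_pow_mul ((∏ k ∈ Finset.range (n+1), ((1 - (X:ℤ⟦X⟧)^(4*k+1)) * (1 - X^(4*k+3))))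
    * ∏ k ∈ Finset.range (2*(n+1)), (1 - (X:ℤ⟦X⟧)^(4*(k+1)))) (n+1) n]
  have hX : (X:ℤ⟦X⟧)^(n+1) * ((∏ k ∈ Finset.range (n+1), ((1 - (X:ℤ⟦X⟧)^(4*k+1)) * (1 - X^(4*k+3))))
        * ∏ k ∈ Finset.range (2*(n+1)), (1 - (X:ℤ⟦X⟧)^(4*(k+1))))
      = SS (n+1) * ∏ k ∈ Finset.range (2*(n+1)), (1 - (X:ℤ⟦X⟧)^(4*(k+1))) := by
    rw [← cauchy (n+1)]; ring
  rw [hX, SS, Finset.sum_mul, map_sum]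
  rw [Finset.sum_congr rfl (fun i hi => term_eval n (n+1) i rfl
    (by have := Finset.mem_range.mp hi; omega))]
  rw [count n]
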